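/- Let f ∈ ℝ[X_1,…,X_n] be a symmetric polynomial of total degree d ≥ 1. Set k = ⌊d/2⌋ and d' = min{d, n}. Then there exist polynomials g_0, g_1, …, g_{d'-k} ∈ ℝ[Z_1,…,Z_k] such that f = g_0(p_1,…,p_k) + Σ_{j=k+1}^{d'} g_{j-k}(p_1,…,p_k) · p_j, where all power sums p_i are taken in the variables X_1,…,X_n. -/

import Mathlib

open MvPolynomial

section Aux
open Finset

variable {n : ℕ}

private lemma psum_isHomogeneous (m : ℕ) : (psum (Fin n) ℝ m).IsHomogeneous m := by
  apply MvPolynomial.IsHomogeneous.sum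
  intro i _
  exact MvPolynomial.isHomogeneous_X_pow i m

/-- aeval of a weighted-homogeneous polynomial at homogeneous values is homogeneous. -/
private lemma isHomogeneous_aeval_weighted {σ : Type*} [Fintype σ] {w : σ → ℕ}
    {φ : MvPolynomial σ ℝ} {m : ℕ} (hφ : φ.IsWeightedHomogeneous w m)
    (g : σ → MvPolynomial (Fin n) ℝ) (hg : ∀ i, (g i).IsHomogeneous (w i)) :
    (aeval g φ).IsHomogeneous m := by
  rw [aeval_def, eval₂_eq]
  apply MvPolynomial.IsHomogeneous.sum
  intro t ht
  rw [show m = 0 + m by ring]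
  apply MvPolynomial.IsHomogeneous.mul (isHomogeneous_C _ _)
  have := MvPolynomial.IsHomogeneous.prod t.support (fun i => g i ^ t i)
    (fun i => w i * t i) (fun i _ => (hg i).pow (t i))
  convert this using 1
  rw [← hφ (Finsupp.mem_support_iff.mp ht), Finsupp.weight_apply, Finsupp.sum]
  simp [smul_eq_mul, mul_comm]

private lemma esymm_mem_adjoin : ∀ j : ℕ, j ≤ n →
    esymm (Fin n) ℝ j ∈ Algebra.adjoin ℝ
      (Set.range fun i : Fin n => psum (Fin n) ℝ ((i : ℕ) + 1)) := by
  intro j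
  induction j using Nat.strong_induction_on with
  | _ j ih =>
  intro hj
  rcases Nat.eq_zero_or_pos j with rfl | hj0
  · simpa [esymm_zero] using Subalgebra.one_mem _
  have hN := mul_esymm_eq_sum (Fin n) ℝ j
  have hji : ((j : ℝ))⁻¹ * (j : ℝ) = 1 := inv_mul_cancel₀ (by positivity)
  have hcast : ((j : ℕ) : MvPolynomial (Fin n) ℝ) = C (j : ℝ) := by
    simp
  have key : esymm (Fin n) ℝ j = C ((j : ℝ))⁻¹ * ((-1) ^ (j + 1) *
      ∑ a ∈ Finset.HasAntidiagonal.antidiagonal j with a.1 < j,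
        (-1) ^ a.1 * esymm (Fin n) ℝ a.1 * psum (Fin n) ℝ a.2) := by
    rw [← hN, hcast, ← mul_assoc, ← C_mul, hji, C_1, one_mul]
  rw [key]
  apply Subalgebra.mul_mem _ (Subalgebra.algebraMap_mem _ _)
  apply Subalgebra.mul_mem
  · exact Subalgebra.pow_mem _ (Subalgebra.neg_mem _ (Subalgebra.one_mem _)) _
  apply Subalgebra.sum_mem
  rintro ⟨a, b⟩ hab
  simp only [Finset.mem_filter, Finset.mem_antidiagonal] at hab
  obtain ⟨hab1, hab2⟩ := hab
  have hab1' : a + b = j := by simpa using hab1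
  apply Subalgebra.mul_mem
  · apply Subalgebra.mul_mem
    · exact Subalgebra.pow_mem _ (Subalgebra.neg_mem _ (Subalgebra.one_mem _)) _
    · exact ih a hab2 (by omega)
  · have hb : 1 ≤ b := by omega
    have hbn : b - 1 < n := by omega
    have : psum (Fin n) ℝ b = psum (Fin n) ℝ (((⟨b - 1, hbn⟩ : Fin n) : ℕ) + 1) := by
      congr 1; simp; omega
    rw [this]
    exact Algebra.subset_adjoin ⟨⟨b - 1, hbn⟩, rfl⟩

private lemma exists_aeval_psum (f : MvPolynomial (Fin n) ℝ) (hf : f.IsSymmetric) :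
    ∃ G : MvPolynomial (Fin n) ℝ,
      f = aeval (fun i : Fin n => psum (Fin n) ℝ ((i : ℕ) + 1)) G := by
  obtain ⟨G₀, hG₀⟩ := esymmAlgHom_fin_surjective (R := ℝ) (le_refl n)
    ⟨f, (mem_symmetricSubalgebra f).mpr hf⟩
  have hf' : f = aeval (fun i : Fin n => esymm (Fin n) ℝ ((i : ℕ) + 1)) G₀ := by
    rw [← esymmAlgHom_apply, hG₀]
  have hmem : f ∈ Algebra.adjoin ℝ
      (Set.range fun i : Fin n => psum (Fin n) ℝ ((i : ℕ) + 1)) := by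
    rw [hf']
    have h1 : aeval (fun i : Fin n => esymm (Fin n) ℝ ((i : ℕ) + 1)) G₀ ∈
        Algebra.adjoin ℝ (Set.range fun i : Fin n => esymm (Fin n) ℝ ((i : ℕ) + 1)) := by
      rw [Algebra.adjoin_range_eq_range_aeval]
      exact ⟨G₀, rfl⟩
    refine Algebra.adjoin_le ?_ h1
    rintro x ⟨i, rfl⟩
    exact esymm_mem_adjoin _ (by omega)
  rw [Algebra.adjoin_range_eq_range_aeval] at hmem
  obtain ⟨G, hG⟩ := hmem
  exact ⟨G, hG.symm⟩

private lemma exists_aeval_psum_weight_le (f : MvPolynomial (Fin n) ℝ) (hf : f.IsSymmetric) :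
    ∃ G : MvPolynomial (Fin n) ℝ,
      f = aeval (fun i : Fin n => psum (Fin n) ℝ ((i : ℕ) + 1)) G ∧
      ∀ t ∈ G.support,
        (Finsupp.weight (fun i : Fin n => (i : ℕ) + 1)) t ≤ f.totalDegree := by
  classical
  obtain ⟨G₀, hG₀⟩ := exists_aeval_psum f hf
  set w : Fin n → ℕ := fun i => (i : ℕ) + 1 with hw
  set P : Fin n → MvPolynomial (Fin n) ℝ := fun i => psum (Fin n) ℝ ((i : ℕ) + 1) with hP
  set N := max f.totalDegree (weightedTotalDegree w G₀) with hN
  have hN1 : f.totalDegree ≤ N := le_max_left _ _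
  have hN2 : weightedTotalDegree w G₀ ≤ N := le_max_right _ _
  have hsum : G₀ = ∑ m ∈ Finset.range (N + 1), weightedHomogeneousComponent w m G₀ := by
    ext t
    rw [coeff_sum]
    simp only [coeff_weightedHomogeneousComponent]
    rw [Finset.sum_ite_eq (Finset.range (N + 1)) ((Finsupp.weight w) t)
      (fun _ => coeff t G₀)]
    split_ifs with h
    · rfl
    · by_contra hc
      apply h
      rw [Finset.mem_range]
      have : (Finsupp.weight w) t ≤ weightedTotalDegree w G₀ :=
        le_weightedTotalDegree w (by simp only [mem_support_iff]; intro h0; exact hc h0)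
      omega
  set q : ℕ → MvPolynomial (Fin n) ℝ :=
    fun m => aeval P (weightedHomogeneousComponent w m G₀) with hq
  have hqh : ∀ m, (q m).IsHomogeneous m := fun m =>
    isHomogeneous_aeval_weighted (weightedHomogeneousComponent_isWeightedHomogeneous m G₀)
      P (fun i => psum_isHomogeneous _)
  have hfq : f = ∑ m ∈ Finset.range (N + 1), q m := by
    rw [hG₀]
    conv_lhs => rw [hsum]
    rw [map_sum]
  have hq0 : ∀ m ∈ Finset.range (N + 1), f.totalDegree < m → q m = 0 := by
    intro m hm hlt
    have h1 : homogeneousComponent m f = q m := by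
      rw [hfq, map_sum]
      have : ∀ m' ∈ Finset.range (N + 1),
          homogeneousComponent m (q m') = if m = m' then q m' else 0 := by
        intro m' _
        exact homogeneousComponent_of_mem ((mem_homogeneousSubmodule m' (q m')).mpr (hqh m'))
      rw [Finset.sum_congr rfl this, Finset.sum_ite_eq (Finset.range (N + 1)) m q,
        if_pos hm]
    rw [← h1]
    exact MvPolynomial.homogeneousComponent_eq_zero m f hlt
  refine ⟨∑ m ∈ Finset.range (f.totalDegree + 1), weightedHomogeneousComponent w m G₀,
    ?_, ?_⟩
  · rw [map_sum]
    conv_lhs => rw [hfq]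
    symm
    apply Finset.sum_subset
    · apply Finset.range_subset_range.mpr; omega
    · intro m hm hm'
      exact hq0 m hm (by simp only [Finset.mem_range] at hm hm'; omega)
  · intro t ht
    rw [mem_support_iff, coeff_sum] at ht
    obtain ⟨m, hm, hcm⟩ : ∃ m ∈ Finset.range (f.totalDegree + 1),
        coeff t (weightedHomogeneousComponent w m G₀) ≠ 0 := by
      by_contra hc
      push_neg at hc
      exact ht (Finset.sum_eq_zero hc)
    have := weightedHomogeneousComponent_isWeightedHomogeneous (w := w) m G₀ hcm
    rw [this]
    simp only [Finset.mem_range] at hm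
    omega

private lemma small_monomial (k : ℕ) (t : Fin n →₀ ℕ) (c : ℝ)
    (ht : ∀ l : Fin n, k ≤ (l : ℕ) → t l = 0) :
    ∃ g0 : MvPolynomial (Fin k) ℝ,
      aeval (fun i : Fin n => psum (Fin n) ℝ ((i : ℕ) + 1)) (monomial t c)
        = aeval (fun l : Fin k => psum (Fin n) ℝ ((l : ℕ) + 1)) g0 := by
  have hlt : ∀ l ∈ t.support, (l : ℕ) < k := fun l hl => by
    by_contra h
    exact (Finsupp.mem_support_iff.mp hl) (ht l (le_of_not_gt h))
  refine ⟨C c * ∏ l ∈ t.support.attach,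
    X (⟨((l : Fin n) : ℕ), hlt l l.2⟩ : Fin k) ^ t l.1, ?_⟩
  rw [aeval_monomial, map_mul, aeval_C, map_prod]
  simp only [map_pow, aeval_X]
  rw [Finset.prod_attach t.support (fun l => psum (Fin n) ℝ ((l : ℕ) + 1) ^ t l)]
  simp [algebraMap_eq, Finsupp.prod]

private lemma good_monomial (d : ℕ) (hd : 1 ≤ d) (t : Fin n →₀ ℕ) (c : ℝ)
    (hw : (Finsupp.weight fun i : Fin n => (i : ℕ) + 1) t ≤ d) :
    ∃ g : ℕ → MvPolynomial (Fin (d / 2)) ℝ,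
      aeval (fun i : Fin n => psum (Fin n) ℝ ((i : ℕ) + 1)) (monomial t c)
        = aeval (fun l : Fin (d / 2) => psum (Fin n) ℝ ((l : ℕ) + 1)) (g 0)
          + ∑ j ∈ Finset.Icc (d / 2 + 1) (min d n),
              aeval (fun l : Fin (d / 2) => psum (Fin n) ℝ ((l : ℕ) + 1)) (g (j - d / 2))
                * psum (Fin n) ℝ j := by
  classical
  have hweq : (Finsupp.weight fun i : Fin n => (i : ℕ) + 1) t
      = ∑ l : Fin n, t l * ((l : ℕ) + 1) := by
    rw [Finsupp.weight_apply, Finsupp.sum_fintype]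
    · simp [smul_eq_mul]
    · intro i; simp
  rw [hweq] at hw
  by_cases hbig : ∃ l : Fin n, d / 2 ≤ (l : ℕ) ∧ t l ≠ 0
  · obtain ⟨l0, hl0, hl0ne⟩ := hbig
    have hterm : t l0 * ((l0 : ℕ) + 1) ≤ d :=
      le_trans (Finset.single_le_sum (f := fun l : Fin n => t l * ((l : ℕ) + 1))
        (fun _ _ => Nat.zero_le _) (Finset.mem_univ l0)) hw
    have ht1 : t l0 = 1 := by
      by_contra h1
      have h2 : 2 ≤ t l0 := by omega
      have := Nat.mul_le_mul h2 (show d / 2 + 1 ≤ (l0 : ℕ) + 1 by omega)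
      omega
    have hothers : ∀ l : Fin n, d / 2 ≤ (l : ℕ) → l ≠ l0 → t l = 0 := by
      intro l hl hne
      by_contra h0
      have hpair := Finset.sum_le_sum_of_subset_of_nonneg
        (show ({l0, l} : Finset (Fin n)) ⊆ Finset.univ from Finset.subset_univ _)
        (fun (x : Fin n) _ _ => Nat.zero_le (t x * ((x : ℕ) + 1)))
      rw [Finset.sum_pair (Ne.symm hne)] at hpair
      have hA : (l0 : ℕ) + 1 = t l0 * ((l0 : ℕ) + 1) := by rw [ht1, one_mul]
      have hB : (l : ℕ) + 1 ≤ t l * ((l : ℕ) + 1) :=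
        Nat.le_mul_of_pos_left _ (by omega)
      omega
    have hjd : (l0 : ℕ) + 1 ≤ d := by
      rw [ht1, one_mul] at hterm; exact hterm
    set t' : Fin n →₀ ℕ := Finsupp.update t l0 0 with ht'
    have ht'app : ∀ l : Fin n, t' l = if l = l0 then 0 else t l := by
      intro l
      by_cases h : l = l0
      · subst h; simp [ht']
      · simp [ht', Finsupp.coe_update, Function.update, h]
    have hsplit : t = t' + Finsupp.single l0 1 := by
      ext l
      rw [Finsupp.add_apply, ht'app]
      by_cases h : l = l0
      · subst h; simp [ht1]
      · simp [h, Finsupp.single_apply, Ne.symm h]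
    have hmono : (monomial t c : MvPolynomial (Fin n) ℝ)
        = monomial t' c * X l0 := by
      rw [X, monomial_mul, mul_one, ← hsplit]
    obtain ⟨g0, hg0⟩ := small_monomial (d / 2) t' c (by
      intro l hl
      rw [ht'app]
      by_cases h : l = l0
      · simp [h]
      · simp [h, hothers l hl h])
    refine ⟨fun i => if i = (l0 : ℕ) + 1 - d / 2 then g0 else 0, ?_⟩
    have h00 : (0 : ℕ) ≠ (l0 : ℕ) + 1 - d / 2 := by omega
    have hmem : (l0 : ℕ) + 1 ∈ Finset.Icc (d / 2 + 1) (min d n) :=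
      Finset.mem_Icc.mpr ⟨by omega, le_min hjd l0.isLt⟩
    rw [hmono, map_mul, hg0, aeval_X,
      Finset.sum_eq_single_of_mem ((l0 : ℕ) + 1) hmem ?side]
    case side =>
      intro j hj hne
      rw [Finset.mem_Icc] at hj
      have hd2 : j - d / 2 ≠ (l0 : ℕ) + 1 - d / 2 := by omega
      simp [hd2]
    simp [h00]
  · push_neg at hbig
    obtain ⟨g0, hg0⟩ := small_monomial (d / 2) t c (fun l hl => hbig l hl)
    refine ⟨fun i => if i = 0 then g0 else 0, ?_⟩
    rw [hg0, Finset.sum_eq_zero, add_zero]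
    · simp
    · intro j hj
      rw [Finset.mem_Icc] at hj
      have : j - d / 2 ≠ 0 := by omega
      simp [this]

end Aux

section Aux2
open Finset

/-- A symmetric polynomial of total degree `d ≥ 1` in `n` variables can be written as
`g_0(p_1,…,p_k) + ∑_{j=k+1}^{d'} g_{j-k}(p_1,…,p_k) · p_j`
where `k = ⌊d/2⌋`, `d' = min d n`, and the `g_i` are `k`-variate polynomials. -/
theorem symmetric_half_powerSum_representation (n d : ℕ) (hd : 1 ≤ d)
    (f : MvPolynomial (Fin n) ℝ) (hf : f.IsSymmetric) (hdeg : f.totalDegree = d) :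
    ∃ g : ℕ → MvPolynomial (Fin (d / 2)) ℝ,
      f = aeval (fun l : Fin (d / 2) => ∑ j : Fin n, X j ^ ((l : ℕ) + 1)) (g 0)
        + ∑ j ∈ Finset.Icc (d / 2 + 1) (min d n),
            aeval (fun l : Fin (d / 2) => ∑ j : Fin n, X j ^ ((l : ℕ) + 1)) (g (j - d / 2))
              * ∑ i : Fin n, X i ^ j := by
  classical
  obtain ⟨G, hG, hGsupp⟩ := exists_aeval_psum_weight_le f hf
  rw [hdeg] at hGsupp
  have key : ∀ S : Finset (Fin n →₀ ℕ),
      (∀ t ∈ S, (Finsupp.weight fun i : Fin n => (i : ℕ) + 1) t ≤ d) →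
      ∃ g : ℕ → MvPolynomial (Fin (d / 2)) ℝ,
        aeval (fun i : Fin n => psum (Fin n) ℝ ((i : ℕ) + 1))
            (∑ t ∈ S, monomial t (coeff t G))
          = aeval (fun l : Fin (d / 2) => psum (Fin n) ℝ ((l : ℕ) + 1)) (g 0)
            + ∑ j ∈ Finset.Icc (d / 2 + 1) (min d n),
                aeval (fun l : Fin (d / 2) => psum (Fin n) ℝ ((l : ℕ) + 1)) (g (j - d / 2))
                  * psum (Fin n) ℝ j := by
    intro S
    induction S using Finset.induction_on with
    | empty => intro _; exact ⟨0, by simp⟩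
    | @insert x T hx ih =>
      intro hS
      obtain ⟨g1, h1⟩ := good_monomial d hd x (coeff x G)
        (hS x (Finset.mem_insert_self x T))
      obtain ⟨g2, h2⟩ := ih (fun t ht => hS t (Finset.mem_insert_of_mem ht))
      refine ⟨fun i => g1 i + g2 i, ?_⟩
      rw [Finset.sum_insert hx, map_add, h1, h2]
      simp only [map_add, add_mul, Finset.sum_add_distrib]
      ring
  obtain ⟨g, hg⟩ := key G.support (fun t ht => hGsupp t ht)
  refine ⟨g, ?_⟩
  rw [hG]
  conv_lhs => rw [G.as_sum]
  exact hg

end Aux2
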